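/- Suppose c1 ≤ Σ_{i=1}^{k} ψ(g(x), i) ≤ c2 holds for μ-almost every x and for g ∈ {f, f*}, and suppose Δ is a real number with ψ(f*(x), y) − ψ(f(x), y) ≤ Δ for μ-almost every (x, y). If η(x) ≤ (k−1)/k for μ-almost every x, then the noisy risks under simple non-uniform noise satisfy R^η_ψ(f*) − R^η_ψ(f) ≤ E_{x∼μ}[ ((c2 − c1 − kΔ)·η(x) + (k−1)·Δ) / (k−1) ]. -/

import Mathlib

open MeasureTheory Finset

/-- The ψ-risk under simple non-uniform label noise with noise-rate function η. -/
noncomputable def noisyRiskFn {X : Type*} [MeasurableSpace X] {k : ℕ}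
    (μ : Measure (X × Fin k)) (ψ : (Fin k → ℝ) → Fin k → ℝ) (g : X → Fin k → ℝ)
    (η : X → ℝ) : ℝ :=
  ∫ p, ((1 - η p.1) * ψ (g p.1) p.2
      + (η p.1 / ((k : ℝ) - 1)) * ∑ i ∈ Finset.univ.erase p.2, ψ (g p.1) i) ∂μ

/-- a bound on the difference of noisy risks under simple
non-uniform noise: if loss sums are a.e. in [c1, c2], the pointwise loss gap
ψ(f*(x), y) − ψ(f(x), y) is a.e. at most Δ, and η(x) ≤ (k−1)/k a.e., then
R^η_ψ(f*) − R^η_ψ(f) ≤ E[((c2 − c1 − kΔ)·η(x) + (k−1)·Δ)/(k−1)]. -/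
theorem noisyRiskFn_gap_bound {X : Type*} [MeasurableSpace X] {k : ℕ} (hk : 2 ≤ k)
    (μ : Measure (X × Fin k)) [IsProbabilityMeasure μ]
    (f fstar : X → Fin k → ℝ) (ψ : (Fin k → ℝ) → Fin k → ℝ)
    (hintf : ∀ i : Fin k, Integrable (fun p : X × Fin k => ψ (f p.1) i) μ)
    (hintfstar : ∀ i : Fin k, Integrable (fun p : X × Fin k => ψ (fstar p.1) i) μ)
    (η : X → ℝ) (hmeas : Measurable η) (hη : ∀ x, 0 ≤ η x ∧ η x < 1)
    (hintη : Integrable (fun p : X × Fin k => η p.1) μ)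
    (c1 c2 : ℝ)
    (hboundf : ∀ᵐ p ∂μ, c1 ≤ ∑ i, ψ (f p.1) i ∧ ∑ i, ψ (f p.1) i ≤ c2)
    (hboundfstar : ∀ᵐ p ∂μ, c1 ≤ ∑ i, ψ (fstar p.1) i ∧ ∑ i, ψ (fstar p.1) i ≤ c2)
    (Δ : ℝ) (hΔ : ∀ᵐ p ∂μ, ψ (fstar p.1) p.2 - ψ (f p.1) p.2 ≤ Δ)
    (hηbound : ∀ᵐ p ∂μ, η p.1 ≤ ((k : ℝ) - 1) / k) :
    noisyRiskFn μ ψ fstar η - noisyRiskFn μ ψ f η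
      ≤ ∫ p, ((c2 - c1 - (k : ℝ) * Δ) * η p.1 + ((k : ℝ) - 1) * Δ) / ((k : ℝ) - 1) ∂μ := by
  have hk1 : (1:ℝ) ≤ (k:ℝ) - 1 := by
    have : (2:ℝ) ≤ (k:ℝ) := by exact_mod_cast hk
    linarith
  have hkpos : (0:ℝ) < (k:ℝ) - 1 := by linarith
  -- integrability of p ↦ ψ (g p.1) p.2
  have hA : ∀ (g : X → Fin k → ℝ), (∀ i : Fin k, Integrable (fun p : X × Fin k => ψ (g p.1) i) μ) →
      Integrable (fun p : X × Fin k => ψ (g p.1) p.2) μ := by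
    intro g hg
    have heq : (fun p : X × Fin k => ψ (g p.1) p.2)
        = fun p => ∑ i : Fin k, Set.indicator {q : X × Fin k | q.2 = i}
            (fun q => ψ (g q.1) i) p := by
      funext p
      rw [Finset.sum_eq_single p.2]
      · simp [Set.indicator]
      · intro i _ hi
        simp [Set.indicator, Ne.symm hi]
      · simp
    rw [heq]
    exact integrable_finset_sum _ fun i _ =>
      (hg i).indicator (measurable_snd (MeasurableSet.singleton i))
  have hAf := hA f hintf
  have hAfstar := hA fstar hintfstar
  have hBf : Integrable (fun p : X × Fin k => ∑ i, ψ (f p.1) i) μ :=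
    integrable_finset_sum _ fun i _ => hintf i
  have hBfstar : Integrable (fun p : X × Fin k => ∑ i, ψ (fstar p.1) i) μ :=
    integrable_finset_sum _ fun i _ => hintfstar i
  have hηmeas : AEStronglyMeasurable (fun p : X × Fin k => η p.1) μ :=
    (hmeas.comp measurable_fst).aestronglyMeasurable
  have hηbdd : ∃ C, ∀ p : X × Fin k, ‖η p.1‖ ≤ C := by
    refine ⟨1, fun p => ?_⟩
    rw [Real.norm_eq_abs, abs_le]
    exact ⟨by linarith [(hη p.1).1], le_of_lt (hη p.1).2⟩
  -- integrability of the noisy-risk integrand for each g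
  have hint : ∀ (g : X → Fin k → ℝ),
      Integrable (fun p : X × Fin k => ψ (g p.1) p.2) μ →
      Integrable (fun p : X × Fin k => ∑ i, ψ (g p.1) i) μ →
      Integrable (fun p : X × Fin k => (1 - η p.1) * ψ (g p.1) p.2
        + (η p.1 / ((k : ℝ) - 1)) * ∑ i ∈ Finset.univ.erase p.2, ψ (g p.1) i) μ := by
    intro g hAg hBg
    have h1 : Integrable (fun p : X × Fin k => (1 - η p.1) * ψ (g p.1) p.2) μ := by
      obtain ⟨C, hC⟩ := hηbdd
      apply hAg.bdd_mul (aestronglyMeasurable_const.sub hηmeas)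
      refine ae_of_all _ (fun p => (show ‖(1:ℝ) - η p.1‖ ≤ 1 + C from (norm_sub_le _ _).trans ?_))
      have := hC p
      simp only [norm_one]
      linarith
    have h2 : Integrable (fun p : X × Fin k =>
        (η p.1 / ((k : ℝ) - 1)) * ∑ i ∈ Finset.univ.erase p.2, ψ (g p.1) i) μ := by
      have heq : (fun p : X × Fin k => (η p.1 / ((k : ℝ) - 1)) *
          ∑ i ∈ Finset.univ.erase p.2, ψ (g p.1) i)
          = fun p => (η p.1 / ((k : ℝ) - 1)) *
            ((∑ i, ψ (g p.1) i) - ψ (g p.1) p.2) := by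
        funext p
        rw [Finset.sum_erase_eq_sub (Finset.mem_univ p.2)]
      rw [heq]
      obtain ⟨C, hC⟩ := hηbdd
      apply (hBg.sub hAg).bdd_mul (((hmeas.comp measurable_fst).div_const _).aestronglyMeasurable)
      refine ae_of_all _ (fun p => (show ‖η p.1 / ((k:ℝ) - 1)‖ ≤ C / ((k:ℝ) - 1) from ?_))
      rw [norm_div, Real.norm_eq_abs ((k:ℝ) - 1), abs_of_pos hkpos]
      gcongr
      exact hC p
    exact h1.add h2
  have hintf' := hint f hAf hBf
  have hintfstar' := hint fstar hAfstar hBfstar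
  have hintrhs : Integrable (fun p : X × Fin k =>
      ((c2 - c1 - (k : ℝ) * Δ) * η p.1 + ((k : ℝ) - 1) * Δ) / ((k : ℝ) - 1)) μ := by
    apply Integrable.div_const
    exact ((hintη.const_mul _).add (integrable_const _))
  rw [noisyRiskFn, noisyRiskFn, ← integral_sub hintfstar' hintf']
  apply integral_mono_ae (hintfstar'.sub hintf') hintrhs
  filter_upwards [hboundf, hboundfstar, hΔ, hηbound] with p hbf hbfs hd hb
  have hη0 := (hη p.1).1
  have hηk : (k:ℝ) * η p.1 ≤ (k:ℝ) - 1 := by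
    rw [le_div_iff₀ (by linarith : (0:ℝ) < (k:ℝ))] at hb
    linarith [hb]
  simp only [Pi.sub_apply]
  rw [Finset.sum_erase_eq_sub (Finset.mem_univ p.2), Finset.sum_erase_eq_sub (Finset.mem_univ p.2)]
  rw [le_div_iff₀ hkpos]
  obtain ⟨t, ht⟩ : ∃ t, η p.1 = t * ((k:ℝ) - 1) :=
    ⟨η p.1 / ((k:ℝ) - 1), (div_mul_cancel₀ _ hkpos.ne').symm⟩
  have ht2 : η p.1 / ((k:ℝ) - 1) = t := by rw [ht]; field_simp
  rw [ht2, ht]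
  have ht0 : 0 ≤ t := by
    by_contra hc
    push_neg at hc
    nlinarith [hη0, ht, hkpos]
  have htk : (k:ℝ) * (t * ((k:ℝ) - 1)) ≤ (k:ℝ) - 1 := by rw [← ht]; exact hηk
  nlinarith [mul_nonneg (by nlinarith : (0:ℝ) ≤ (k:ℝ) - 1 - (k:ℝ) * (t * ((k:ℝ) - 1)))
      (by linarith : (0:ℝ) ≤ Δ - (ψ (fstar p.1) p.2 - ψ (f p.1) p.2)),
    mul_nonneg (mul_nonneg ht0 hkpos.le)
      (by linarith [hbf.1, hbfs.2] : (0:ℝ) ≤ (c2 - c1) - ((∑ i, ψ (fstar p.1) i) - (∑ i, ψ (f p.1) i)))]
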